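/- Let a₁ = diag(1,4), a₂ = diag(2,1) ∈ M₂(ℂ) and D = diag(2,1). The set K ⊆ ℝ⁴ of all nonincreasing 4-tuples (γ₁ ≥ γ₂ ≥ γ₃ ≥ γ₄) that occur as the eigenvalue sequence of a₁⊗(U D U*) + a₂⊗(V D V*) for some unitaries U, V ∈ U(2) is not a convex subset of ℝ⁴. -/

import Mathlib

/- STATEMENT 14 (Example 4.3, punchline): With a₁ = diag(1,4), a₂ = diag(2,1), D = diag(2,1),
the set of nonincreasing 4-tuples arising as eigenvalue sequences of
a₁⊗(U D U*) + a₂⊗(V D V*), for U, V ∈ U(2), is not convex in ℝ⁴. -/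

open Matrix Polynomial
open scoped Kronecker

noncomputable section

def a1 : Matrix (Fin 2) (Fin 2) ℂ := !![1, 0; 0, 4]

def a2 : Matrix (Fin 2) (Fin 2) ℂ := !![2, 0; 0, 1]

def Dmat : Matrix (Fin 2) (Fin 2) ℂ := !![2, 0; 0, 1]

/-- The quantum Horn body K^{a₁,a₂}_{(2,1),(2,1)}, as a set of nonincreasing eigenvalue
4-tuples: γ is the eigenvalue sequence of a₁⊗(UDU*) + a₂⊗(VDV*) iff the characteristic
polynomial of that matrix is ∏ᵢ (X − γᵢ). -/
def quantumHornBody : Set (Fin 4 → ℝ) :=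
  {γ | Antitone γ ∧
    ∃ U V : Matrix.unitaryGroup (Fin 2) ℂ,
      (a1 ⊗ₖ ((U : Matrix (Fin 2) (Fin 2) ℂ) * Dmat * (U : Matrix (Fin 2) (Fin 2) ℂ)ᴴ) +
        a2 ⊗ₖ ((V : Matrix (Fin 2) (Fin 2) ℂ) * Dmat *
          (V : Matrix (Fin 2) (Fin 2) ℂ)ᴴ)).charpoly
        = ∏ i : Fin 4, (X - C ((γ i : ℝ) : ℂ))}

/-- Reindexing `Fin 2 × Fin 2 ≃ Fin 2 ⊕ Fin 2`. -/
def myEquiv : Fin 2 × Fin 2 ≃ Fin 2 ⊕ Fin 2 where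
  toFun p := if p.1 = 0 then Sum.inl p.2 else Sum.inr p.2
  invFun s := Sum.elim (fun k => (0, k)) (fun k => (1, k)) s
  left_inv := by decide
  right_inv := by decide

lemma charpoly_two (M : Matrix (Fin 2) (Fin 2) ℂ) :
    M.charpoly = X ^ 2 - C M.trace * X + C M.det := by
  rw [Matrix.charpoly, Matrix.det_fin_two]
  simp [charmatrix_apply, Matrix.trace_fin_two, Matrix.det_fin_two, Matrix.one_apply]
  ring

/-- The key block-diagonal decomposition of the characteristic polynomial. -/
lemma key (B C : Matrix (Fin 2) (Fin 2) ℂ) :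
    (a1 ⊗ₖ B + a2 ⊗ₖ C).charpoly
      = (B + (2 : ℂ) • C).charpoly * ((4 : ℂ) • B + C).charpoly := by
  have h : Matrix.reindex myEquiv myEquiv (a1 ⊗ₖ B + a2 ⊗ₖ C)
      = Matrix.fromBlocks (B + (2 : ℂ) • C) 0 0 ((4 : ℂ) • B + C) := by
    ext i j
    cases i <;> cases j <;>
      simp [myEquiv, Matrix.kroneckerMap_apply, a1, a2, Matrix.fromBlocks]
  rw [← Matrix.charpoly_reindex myEquiv, h, Matrix.charpoly_fromBlocks_zero₁₂]

lemma trace_conj (U : Matrix.unitaryGroup (Fin 2) ℂ) :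
    ((U : Matrix (Fin 2) (Fin 2) ℂ) * Dmat * (U : Matrix (Fin 2) (Fin 2) ℂ)ᴴ).trace = 3 := by
  have hU : (U : Matrix (Fin 2) (Fin 2) ℂ)ᴴ * (U : Matrix (Fin 2) (Fin 2) ℂ) = 1 := by
    simpa [Matrix.star_eq_conjTranspose] using Matrix.UnitaryGroup.star_mul_self U
  rw [Matrix.trace_mul_cycle, hU, Matrix.one_mul]
  simp [Dmat, Matrix.trace_fin_two]
  norm_num

theorem quantumHornBody_not_convex : ¬ Convex ℝ quantumHornBody := by
  intro hconv
  -- first point: U = V = 1 gives eigenvalues (10, 6, 5, 3)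
  have ha : (![10, 6, 5, 3] : Fin 4 → ℝ) ∈ quantumHornBody := by
    refine ⟨?_, 1, 1, ?_⟩
    · intro i j hij
      fin_cases i <;> fin_cases j <;> simp_all <;> norm_num
    · have h1 : ((1 : Matrix.unitaryGroup (Fin 2) ℂ) : Matrix (Fin 2) (Fin 2) ℂ) = 1 := rfl
      rw [h1]
      simp only [Matrix.one_mul, Matrix.conjTranspose_one, Matrix.mul_one]
      rw [key, charpoly_two, charpoly_two, Fin.prod_univ_four]
      have e1 : Dmat + (2 : ℂ) • Dmat = !![6, 0; 0, 3] := by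
        ext i j; fin_cases i <;> fin_cases j <;> simp [Dmat] <;> norm_num
      have e2 : (4 : ℂ) • Dmat + Dmat = !![10, 0; 0, 5] := by
        ext i j; fin_cases i <;> fin_cases j <;> simp [Dmat] <;> norm_num
      rw [e1, e2]
      simp [Matrix.trace_fin_two, Matrix.det_fin_two]
      norm_num
      ring
  -- second point: U = 1, V = swap gives eigenvalues (9, 6, 5, 4)
  have hswap : (!![0, 1; 1, 0] : Matrix (Fin 2) (Fin 2) ℂ) ∈ Matrix.unitaryGroup (Fin 2) ℂ := by
    constructor <;>
      · ext i j
        fin_cases i <;> fin_cases j <;>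
          simp [Matrix.mul_apply, Fin.sum_univ_two, Matrix.one_apply]
  have hb : (![9, 6, 5, 4] : Fin 4 → ℝ) ∈ quantumHornBody := by
    refine ⟨?_, 1, ⟨!![0, 1; 1, 0], hswap⟩, ?_⟩
    · intro i j hij
      fin_cases i <;> fin_cases j <;> simp_all <;> norm_num
    · have h1 : ((1 : Matrix.unitaryGroup (Fin 2) ℂ) : Matrix (Fin 2) (Fin 2) ℂ) = 1 := rfl
      rw [h1]
      simp only [Matrix.one_mul, Matrix.conjTranspose_one, Matrix.mul_one]
      have hC : (!![0, 1; 1, 0] : Matrix (Fin 2) (Fin 2) ℂ) * Dmat * (!![0, 1; 1, 0]ᴴ)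
          = !![1, 0; 0, 2] := by
        ext i j
        fin_cases i <;> fin_cases j <;>
          simp [Dmat, Matrix.mul_apply, Fin.sum_univ_two]
      rw [hC]
      rw [key, charpoly_two, charpoly_two, Fin.prod_univ_four]
      have e1 : Dmat + (2 : ℂ) • !![1, 0; 0, 2] = !![4, 0; 0, 5] := by
        ext i j; fin_cases i <;> fin_cases j <;> simp [Dmat] <;> norm_num
      have e2 : (4 : ℂ) • Dmat + !![1, 0; 0, 2] = !![9, 0; 0, 6] := by
        ext i j; fin_cases i <;> fin_cases j <;> simp [Dmat] <;> norm_num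
      rw [e1, e2]
      simp [Matrix.trace_fin_two, Matrix.det_fin_two]
      norm_num
      ring
  -- the midpoint
  have hmid := hconv ha hb (by norm_num : (0:ℝ) ≤ 1/2) (by norm_num : (0:ℝ) ≤ 1/2)
    (by norm_num)
  obtain ⟨-, U, V, hchar⟩ := hmid
  set B := (U : Matrix (Fin 2) (Fin 2) ℂ) * Dmat * (U : Matrix (Fin 2) (Fin 2) ℂ)ᴴ with hBdef
  set Cm := (V : Matrix (Fin 2) (Fin 2) ℂ) * Dmat * (V : Matrix (Fin 2) (Fin 2) ℂ)ᴴ with hCdef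
  rw [key, charpoly_two, charpoly_two] at hchar
  have htr1 : (B + (2 : ℂ) • Cm).trace = 9 := by
    rw [Matrix.trace_add, Matrix.trace_smul, trace_conj U, trace_conj V]
    norm_num
  have htr2 : ((4 : ℂ) • B + Cm).trace = 15 := by
    rw [Matrix.trace_add, Matrix.trace_smul, trace_conj U, trace_conj V]
    norm_num
  rw [htr1, htr2] at hchar
  set u := (B + (2 : ℂ) • Cm).det with hu
  set v := ((4 : ℂ) • B + Cm).det with hv
  simp only [Fin.prod_univ_four, Pi.add_apply, Pi.smul_apply, Matrix.cons_val_zero,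
    Matrix.cons_val_one, Matrix.head_cons, Matrix.cons_val_two, Matrix.cons_val_three,
    Matrix.tail_cons, smul_eq_mul] at hchar
  norm_num at hchar
  have h6 := congrArg (Polynomial.eval (6 : ℂ)) hchar
  have h5 := congrArg (Polynomial.eval (5 : ℂ)) hchar
  have h95 := congrArg (Polynomial.eval (19/2 : ℂ)) hchar
  simp only [eval_mul, eval_add, eval_sub, eval_pow, eval_X, eval_C] at h6 h5 h95
  have e6 : (u - 18) * (v - 54) = 0 := by linear_combination h6
  have e5 : (u - 20) * (v - 50) = 0 := by linear_combination h5
  have e95 : (u + 19/4) * (v - 209/4) = 0 := by linear_combination h95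
  have d6 : u = 18 ∨ v = 54 :=
    (mul_eq_zero.mp e6).imp (fun h => by linear_combination h) (fun h => by linear_combination h)
  have d5 : u = 20 ∨ v = 50 :=
    (mul_eq_zero.mp e5).imp (fun h => by linear_combination h) (fun h => by linear_combination h)
  rcases d6 with h1 | h1 <;> rcases d5 with h2 | h2
  · rw [h1] at h2; norm_num at h2
  · rw [h1, h2] at e95; norm_num at e95
  · rw [h1, h2] at e95; norm_num at e95
  · rw [h1] at h2; norm_num at h2

end
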